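/- For any subset S of vertices of a complete directed weighted graph, vertices v,u ∈ S, and integer k with 1 ≤ k ≤ |S|, the maximum weight L(S,v,u) of a path visiting every vertex of S exactly once, starting at v and ending at u, satisfies L(S,v,u) = max over subsets S' ⊆ S with |S'| = k, v ∈ S', and over y ∈ S', of L(S',v,y) + L((S \ S') ∪ {y}, y, u), where L is -∞ when no such path exists. -/

import Mathlib

/-- Total weight of a path given as a list of vertices: sum of weights of consecutive edges. -/
def pathWeight {V : Type*} (w : V → V → ℝ) (p : List V) : ℝ :=
  ((p.zip p.tail).map (fun e => w e.1 e.2)).sum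

/-- `L w S v u` is the maximum (as a supremum in `EReal`, so `⊥ = -∞` when no path exists)
of the weights of paths that visit every vertex of `S` exactly once, start at `v`
and end at `u`. -/
noncomputable def maxPathWeight {V : Type*} [DecidableEq V] (w : V → V → ℝ)
    (S : Finset V) (v u : V) : EReal :=
  sSup {x : EReal | ∃ p : List V, p.Nodup ∧ p.toFinset = S ∧
    p.head? = some v ∧ p.getLast? = some u ∧ x = (pathWeight w p : EReal)}

section helper
set_option linter.unusedSectionVars false
variable {V : Type*} [DecidableEq V] (w : V → V → ℝ)

lemma pathWeight_cons_cons (x y : V) (l : List V) :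
    pathWeight w (x :: y :: l) = w x y + pathWeight w (y :: l) := by
  simp [pathWeight]

lemma pathWeight_append (a b : List V) (ha : a ≠ []) :
    pathWeight w (a ++ b) = pathWeight w a + pathWeight w (a.getLast ha :: b) := by
  induction a with
  | nil => simp at ha
  | cons x rest ih =>
    cases rest with
    | nil => simp [pathWeight]
    | cons y rest' =>
      have h2 : y :: rest' ≠ [] := by simp
      have := ih h2
      simp only [List.cons_append] at *
      rw [pathWeight_cons_cons, pathWeight_cons_cons, this,
        List.getLast_cons h2]
      ring

lemma le_maxPathWeight {S : Finset V} {v u : V} {p : List V}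
    (h1 : p.Nodup) (h2 : p.toFinset = S) (h3 : p.head? = some v)
    (h4 : p.getLast? = some u) :
    (pathWeight w p : EReal) ≤ maxPathWeight w S v u :=
  le_sSup ⟨p, h1, h2, h3, h4, rfl⟩

lemma maxPathWeight_attained {S : Finset V} {v u : V}
    (h : maxPathWeight w S v u ≠ ⊥) :
    ∃ p : List V, p.Nodup ∧ p.toFinset = S ∧ p.head? = some v ∧
      p.getLast? = some u ∧ maxPathWeight w S v u = (pathWeight w p : EReal) := by
  set A := {x : EReal | ∃ p : List V, p.Nodup ∧ p.toFinset = S ∧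
    p.head? = some v ∧ p.getLast? = some u ∧ x = (pathWeight w p : EReal)} with hA
  have hfin : A.Finite := by
    have : A ⊆ (fun p : List V => (pathWeight w p : EReal)) ''
        {p | p ∈ S.toList.permutations} := by
      rintro x ⟨p, hp1, hp2, -, -, hx⟩
      exact ⟨p, by
        simp only [Set.mem_setOf_eq, List.mem_permutations]
        exact List.perm_of_nodup_nodup_toFinset_eq hp1 S.nodup_toList
          (by rw [hp2]; simp), hx.symm⟩
    exact Set.Finite.subset ((List.finite_toSet _).image _) this
  have hne : A.Nonempty := by
    by_contra hc
    rw [Set.not_nonempty_iff_eq_empty] at hc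
    exact h (by rw [maxPathWeight, ← hA, hc, sSup_empty])
  have := hne.csSup_mem hfin
  rw [maxPathWeight, ← hA]
  obtain ⟨p, h1, h2, h3, h4, h5⟩ := this
  exact ⟨p, h1, h2, h3, h4, h5⟩
end helper

lemma getLast?_cons_of_ne_nil' {V : Type*} (y : V) (b : List V) (hb : b ≠ []) :
    (y :: b).getLast? = b.getLast? := by
  obtain ⟨z, t, rfl⟩ := List.exists_cons_of_ne_nil hb
  simp [List.getLast?]

lemma insert_eq_union_singleton' {V : Type*} [DecidableEq V] (s : Finset V) (x : V) :
    insert x s = s ∪ {x} := by ext a; simp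

theorem stmt_0 {V : Type*} [DecidableEq V] (w : V → V → ℝ)
    (S : Finset V) (v u : V) (k : ℕ)
    (hv : v ∈ S) (hu : u ∈ S) (hk1 : 1 ≤ k) (hk2 : k ≤ S.card) :
    maxPathWeight w S v u =
      sSup {x : EReal | ∃ S' : Finset V, S' ⊆ S ∧ S'.card = k ∧ v ∈ S' ∧
        ∃ y ∈ S', x = maxPathWeight w S' v y +
          maxPathWeight w ((S \ S') ∪ {y}) y u} := by
  apply le_antisymm
  · apply sSup_le
    rintro x ⟨p, hnd, htf, hhd, hlast, hx⟩
    have hpne : p ≠ [] := by rintro rfl; simp at hhd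
    have hlen : p.length = S.card := by rw [← htf, List.toFinset_card_of_nodup hnd]
    obtain ⟨a, b, hab, hlena⟩ : ∃ a b, p = a ++ b ∧ a.length = k :=
      ⟨p.take k, p.drop k, (List.take_append_drop k p).symm,
        by rw [List.length_take, hlen]; exact min_eq_left hk2⟩
    have hane : a ≠ [] := by intro h; rw [h] at hlena; simp at hlena; omega
    obtain ⟨z0, t0, hacons⟩ := List.exists_cons_of_ne_nil hane
    set y := a.getLast hane with hy
    rw [hab, List.nodup_append'] at hnd
    obtain ⟨hnda, hndb, hdisj⟩ := hnd
    rw [hab, List.toFinset_append] at htf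
    have hS'sub : a.toFinset ⊆ S := htf ▸ Finset.subset_union_left
    have hS'card : a.toFinset.card = k := by
      rw [List.toFinset_card_of_nodup hnda, hlena]
    have hhda : a.head? = some v := by
      rw [hab, hacons] at hhd; rw [hacons]; simpa using hhd
    have hvS' : v ∈ a.toFinset := by
      rw [hacons] at hhda ⊢
      simp only [List.head?_cons, Option.some.injEq] at hhda
      simp [← hhda]
    have hyS' : y ∈ a.toFinset := List.mem_toFinset.mpr (List.getLast_mem hane)
    have hbtf : b.toFinset = S \ a.toFinset := by
      ext z
      simp only [Finset.mem_sdiff, ← htf, Finset.mem_union, List.mem_toFinset]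
      constructor
      · intro hz; exact ⟨Or.inr hz, fun hza => hdisj hza hz⟩
      · rintro ⟨hz | hz, hza⟩ <;> tauto
    have hglasta : a.getLast? = some y := List.getLast?_eq_getLast hane
    have hndyb : (y :: b).Nodup :=
      List.nodup_cons.mpr ⟨fun hyb => hdisj (List.getLast_mem hane) hyb, hndb⟩
    have hybtf : (y :: b).toFinset = (S \ a.toFinset) ∪ {y} := by
      rw [List.toFinset_cons, hbtf, insert_eq_union_singleton']
    have hglastyb : (y :: b).getLast? = some u := by
      rcases eq_or_ne b [] with hbe | hbe
      · rw [hbe] at hab; simp at hab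
        rw [← hab, hlast] at hglasta
        rw [hbe]
        simpa [List.getLast?] using hglasta.symm
      · rw [getLast?_cons_of_ne_nil' y b hbe]
        rw [hab, List.getLast?_append_of_ne_nil _ hbe] at hlast
        exact hlast
    have hw : pathWeight w p = pathWeight w a + pathWeight w (y :: b) := by
      rw [hab, pathWeight_append w a b hane]
    refine le_trans ?_ (le_sSup ⟨a.toFinset, hS'sub, hS'card, hvS', y, hyS', rfl⟩)
    rw [hx, hw, EReal.coe_add]
    exact add_le_add (le_maxPathWeight w hnda rfl hhda hglasta)
      (le_maxPathWeight w hndyb hybtf rfl hglastyb)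
  · apply sSup_le
    rintro x ⟨S', hsub, hcard, hvS', y, hyS', hx⟩
    by_cases h1 : maxPathWeight w S' v y = ⊥
    · rw [hx, h1, EReal.bot_add]; exact bot_le
    by_cases h2 : maxPathWeight w ((S \ S') ∪ {y}) y u = ⊥
    · rw [hx, h2, EReal.add_bot]; exact bot_le
    obtain ⟨p1, hnd1, htf1, hhd1, hlast1, heq1⟩ := maxPathWeight_attained w h1
    obtain ⟨p2, hnd2, htf2, hhd2, hlast2, heq2⟩ := maxPathWeight_attained w h2
    have hp1ne : p1 ≠ [] := by rintro rfl; simp at hhd1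
    have hp2ne : p2 ≠ [] := by rintro rfl; simp at hhd2
    obtain ⟨t, rfl⟩ : ∃ t, p2 = y :: t := by
      obtain ⟨z, t, rfl⟩ := List.exists_cons_of_ne_nil hp2ne
      simp only [List.head?_cons, Option.some.injEq] at hhd2
      exact ⟨t, by rw [hhd2]⟩
    rw [List.nodup_cons] at hnd2
    obtain ⟨hynt, hndt⟩ := hnd2
    have hynSS' : y ∉ S \ S' := fun h => (Finset.mem_sdiff.mp h).2 hyS'
    have httf : t.toFinset = S \ S' := by
      rw [List.toFinset_cons] at htf2
      ext z
      constructor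
      · intro hz
        have hz2 : z ∈ (S \ S') ∪ {y} := by
          rw [← htf2]; exact Finset.mem_insert_of_mem hz
        rcases Finset.mem_union.mp hz2 with h | h
        · exact h
        · exact absurd (List.mem_toFinset.mp (by rwa [Finset.mem_singleton.mp h] at hz)) hynt
      · intro hz
        have hz2 : z ∈ insert y t.toFinset := by
          rw [htf2]; exact Finset.mem_union_left _ hz
        rcases Finset.mem_insert.mp hz2 with h | h
        · exact absurd (h ▸ hz) hynSS'
        · exact h
    have hglast1 : p1.getLast hp1ne = y := by
      have := List.getLast?_eq_getLast hp1ne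
      rw [hlast1] at this
      exact (Option.some.injEq _ _ ▸ this).symm
    have hdisj : p1.Disjoint t := by
      intro z hz1 hz2
      have hzS : z ∈ S \ S' := httf ▸ List.mem_toFinset.mpr hz2
      exact (Finset.mem_sdiff.mp hzS).2 (htf1 ▸ List.mem_toFinset.mpr hz1)
    have hndq : (p1 ++ t).Nodup := List.nodup_append'.mpr ⟨hnd1, hndt, hdisj⟩
    have htfq : (p1 ++ t).toFinset = S := by
      rw [List.toFinset_append, htf1, httf, Finset.union_sdiff_of_subset hsub]
    have hhdq : (p1 ++ t).head? = some v := by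
      obtain ⟨z, s, rfl⟩ := List.exists_cons_of_ne_nil hp1ne
      simpa using hhd1
    have hlastq : (p1 ++ t).getLast? = some u := by
      rcases eq_or_ne t [] with hte | hte
      · subst hte
        rw [List.append_nil, List.getLast?_eq_getLast hp1ne, hglast1]
        simpa [List.getLast?] using hlast2
      · rw [List.getLast?_append_of_ne_nil _ hte]
        rw [getLast?_cons_of_ne_nil' y t hte] at hlast2
        exact hlast2
    have hwq : pathWeight w (p1 ++ t) = pathWeight w p1 + pathWeight w (y :: t) := by
      rw [pathWeight_append w p1 t hp1ne, hglast1]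
    rw [hx, heq1, heq2, ← EReal.coe_add, ← hwq]
    exact le_maxPathWeight w hndq htfq hhdq hlastq
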